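/- Let d ≥ 2 and let m be an integer not divisible by d. Define the d×d diagonal matrix U by U_{jk} = e^{πi m j/d}·δ_{jk} for j,k ∈ {1,…,d}. Then U is unitary, Tr(U†U*) = 0, and consequently its imaginarity-generating power attains the maximal value: (d² − |Tr(U†U*)|²)/(2d(d+2)) = d/(2(d+2)). -/

import Mathlib

open Matrix

noncomputable section

/-- **Generalized Pauli-Z operators maximize the imaginarity-generating power.**
For `d ≥ 2` and an integer `m` not divisible by `d`, the diagonal matrix
`U_{jk} = e^{πi m j/d} δ_{jk}` (with `j, k ∈ {1,…,d}`) is unitary, satisfies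
`Tr(U†U*) = 0`, and its imaginarity-generating power attains the maximal value
`d/(2(d+2))`. -/
theorem generalized_pauliZ_maximal_IGP
    (d : ℕ) (hd : 2 ≤ d) (m : ℤ) (hm : ¬ (d : ℤ) ∣ m)
    (U : Matrix (Fin d) (Fin d) ℂ)
    (hUdef : U = Matrix.diagonal fun j : Fin d =>
      Complex.exp (Real.pi * Complex.I * m * ((j : ℕ) + 1) / d)) :
    U ∈ Matrix.unitaryGroup (Fin d) ℂ ∧
    (Uᴴ * U.map (starRingEnd ℂ)).trace = 0 ∧
    ((d : ℝ) ^ 2 - ‖(Uᴴ * U.map (starRingEnd ℂ)).trace‖ ^ 2) /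
        (2 * d * (d + 2)) = d / (2 * (d + 2)) := by
  have hdn : d ≠ 0 := by omega
  have hd0 : (d : ℂ) ≠ 0 := Nat.cast_ne_zero.mpr hdn
  set z : Fin d → ℂ := fun j : Fin d =>
      Complex.exp (Real.pi * Complex.I * m * ((j : ℕ) + 1) / d) with hz
  have hconj : ∀ j, (starRingEnd ℂ) (z j)
      = Complex.exp (-(Real.pi * Complex.I * m * ((j : ℕ) + 1) / d)) := by
    intro j
    rw [hz, ← Complex.exp_conj]
    congr 1
    simp [map_div₀, Complex.conj_I]
    ring
  have hmem : U ∈ Matrix.unitaryGroup (Fin d) ℂ := by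
    rw [Matrix.mem_unitaryGroup_iff, hUdef]
    rw [Matrix.star_eq_conjTranspose, Matrix.diagonal_conjTranspose,
      Matrix.diagonal_mul_diagonal]
    have h1 : (fun i => z i * star z i) = fun _ : Fin d => (1:ℂ) := by
      funext j
      have hsz : z j * star z j = z j * (starRingEnd ℂ) (z j) := rfl
      rw [hsz, hconj j, hz, ← Complex.exp_add]
      simp
    rw [h1]
    exact Matrix.diagonal_one
  have htr : (Uᴴ * U.map (starRingEnd ℂ)).trace = 0 := by
    rw [hUdef, Matrix.diagonal_conjTranspose,
      Matrix.diagonal_map (by simp), Matrix.diagonal_mul_diagonal,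
      Matrix.trace_diagonal]
    set w := Complex.exp (-(2*Real.pi * Complex.I * m / d)) with hw
    have key : ∀ j : Fin d, star z j * (starRingEnd ℂ) (z j)
        = w ^ ((j:ℕ)+1) := by
      intro j
      have hsz : star z j * (starRingEnd ℂ) (z j)
          = (starRingEnd ℂ) (z j) * (starRingEnd ℂ) (z j) := rfl
      rw [hsz, hconj j, ← Complex.exp_add, hw, ← Complex.exp_nat_mul]
      congr 1
      push_cast
      field_simp
      ring
    rw [Finset.sum_congr rfl fun j _ => key j]
    have hw1 : w ≠ 1 := by
      rw [hw, Ne, Complex.exp_eq_one_iff]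
      rintro ⟨n, hn⟩
      apply hm
      have hpi : (Real.pi : ℂ) ≠ 0 := by exact_mod_cast Real.pi_ne_zero
      have hc : (2*(Real.pi:ℂ)*Complex.I) ≠ 0 :=
        mul_ne_zero (mul_ne_zero two_ne_zero hpi) Complex.I_ne_zero
      field_simp at hn
      have h2 : (2*(Real.pi:ℂ)*Complex.I) * (m:ℂ)
          = (2*(Real.pi:ℂ)*Complex.I) * (-(n:ℂ)*(d:ℂ)) := by
        linear_combination (-(2*(Real.pi:ℂ)*Complex.I)) * hn
      have h3 := mul_left_cancel₀ hc h2
      refine Dvd.intro (-n) ?_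
      have : (m:ℂ) = ((-n * d : ℤ):ℂ) := by push_cast; exact h3
      have h4 : m = -n * (d:ℤ) := by exact_mod_cast this
      rw [h4]; ring
    have hwd : w ^ d = 1 := by
      rw [hw, ← Complex.exp_nat_mul]
      have : (d:ℂ) * -(2*Real.pi * Complex.I * m / d) = (-m : ℤ) * (2*Real.pi*Complex.I) := by
        push_cast; field_simp
      rw [this]
      exact_mod_cast Complex.exp_int_mul_two_pi_mul_I (-m)
    have hsum : ∑ j : Fin d, w ^ ((j:ℕ)+1) = w * ∑ j ∈ Finset.range d, w ^ j := by
      rw [Finset.mul_sum, Fin.sum_univ_eq_sum_range (fun j => w ^ (j+1))]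
      exact Finset.sum_congr rfl fun j _ => by rw [pow_succ, mul_comm]
    rw [hsum, geom_sum_eq hw1, hwd]
    simp
  refine ⟨hmem, htr, ?_⟩
  rw [htr]
  simp only [map_zero, norm_zero, ne_eq]
  have hdR : (d:ℝ) ≠ 0 := Nat.cast_ne_zero.mpr hdn
  field_simp
  ring
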